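/- arXiv:1207.3778 — 8 statements merged into one kernel-verified Lean document; each statement's English description precedes it below -/
import Mathlib

section
/- The map x : α ↦ ᾱ is an involution of Q₁ (ᾱ̄ = α for all α), and the subgroup of the permutation group of Q₁ generated by the two permutations x : α ↦ ᾱ and y : α ↦ g(α) acts transitively on Q₁: for all arrows α, β there is an element w of this subgroup with w(α) = β. (Since x² = (x∘y)³ = id, this yields a transitive action of PSL₂(ℤ) on Q₁.) -/
theorem stmt_4
  {Q₀ Q₁ : Type} [Fintype Q₀] [Fintype Q₁] [DecidableEq Q₀] [DecidableEq Q₁]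
  [Nonempty Q₀] [Nonempty Q₁]
  (s t : Q₁ → Q₀)
  (hconn : ∀ u v : Q₀, Relation.EqvGen (fun a b => ∃ e : Q₁, s e = a ∧ t e = b) u v)
  (hnoloop : ∀ e : Q₁, s e ≠ t e)
  (hno2cyc : ∀ e e' : Q₁, ¬ (s e = t e' ∧ t e = s e'))
  (hout : ∀ v : Q₀, (Finset.univ.filter fun e => s e = v).card = 2)
  (hin : ∀ v : Q₀, (Finset.univ.filter fun e => t e = v).card = 2)
  (f g : Q₁ ≃ Q₁)
  (hfg : ∀ α : Q₁, f α ≠ g α)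
  (hsf : ∀ α : Q₁, s (f α) = t α)
  (hsg : ∀ α : Q₁, s (g α) = t α)
  (hf3 : ∀ α : Q₁, f (f (f α)) = α)
  (bar : Q₁ → Q₁)
  (hbar_ne : ∀ α : Q₁, bar α ≠ α)
  (hbar_s : ∀ α : Q₁, s (bar α) = s α) :
    (∀ α : Q₁, bar (bar α) = α) ∧
      ∃ xp : Equiv.Perm Q₁, (∀ α : Q₁, xp α = bar α) ∧
        ∀ α β : Q₁, ∃ w ∈ Subgroup.closure ({xp, g} : Set (Equiv.Perm Q₁)), w α = β := by
  -- key: arrows with a given source form exactly the pair {a, bar a}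
  have hpair : ∀ a b : Q₁, s b = s a → b = a ∨ b = bar a := by
    intro a b hsb
    have hsub : ({a, bar a} : Finset Q₁) ⊆ Finset.univ.filter (fun e => s e = s a) := by
      intro x hx
      simp only [Finset.mem_insert, Finset.mem_singleton] at hx
      rcases hx with h | h <;> subst h <;> simp [hbar_s]
    have hcard : ({a, bar a} : Finset Q₁).card = 2 := by
      rw [Finset.card_insert_of_notMem (fun h => hbar_ne a (Finset.mem_singleton.mp h).symm),
        Finset.card_singleton]
    have heq : ({a, bar a} : Finset Q₁) = Finset.univ.filter (fun e => s e = s a) :=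
      Finset.eq_of_subset_of_card_le hsub (by rw [hout, hcard])
    have hb : b ∈ ({a, bar a} : Finset Q₁) := by
      rw [heq]; simp [hsb]
    simpa using hb
  have hinv : ∀ α : Q₁, bar (bar α) = α := by
    intro α
    rcases hpair α (bar (bar α)) (by rw [hbar_s, hbar_s]) with h | h
    · exact h
    · exact absurd h (hbar_ne (bar α))
  have hbij : Function.Bijective bar := by
    have : Function.Injective bar := fun a b hab => by
      rw [← hinv a, hab, hinv]
    exact ⟨this, fun b => ⟨bar b, hinv b⟩⟩
  set xp : Equiv.Perm Q₁ := Equiv.ofBijective bar hbij with hxp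
  have hxp_apply : ∀ α, xp α = bar α := fun α => rfl
  refine ⟨hinv, xp, hxp_apply, ?_⟩
  set G := Subgroup.closure ({xp, g} : Set (Equiv.Perm Q₁)) with hG
  set rel : Q₁ → Q₁ → Prop := fun a b => ∃ w ∈ G, w a = b with hrel
  have hxpG : xp ∈ G := Subgroup.subset_closure (by simp)
  have hgG : g ∈ G := Subgroup.subset_closure (by simp)
  have hrefl : ∀ a, rel a a := fun a => ⟨1, one_mem G, rfl⟩
  have hsymm : ∀ a b, rel a b → rel b a := by
    rintro a b ⟨w, hw, hwa⟩
    exact ⟨w⁻¹, inv_mem hw, by rw [← hwa]; simp⟩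
  have htrans : ∀ a b c, rel a b → rel b c → rel a c := by
    rintro a b c ⟨w, hw, hwa⟩ ⟨w', hw', hwb⟩
    exact ⟨w' * w, mul_mem hw' hw, by simp [Equiv.Perm.mul_apply, hwa, hwb]⟩
  have hrel_bar : ∀ a, rel a (bar a) := fun a => ⟨xp, hxpG, rfl⟩
  have hrel_g : ∀ a, rel a (g a) := fun a => ⟨g, hgG, rfl⟩
  have hsame : ∀ a b, s a = s b → rel a b := by
    intro a b hs
    rcases hpair a b hs.symm with h | h
    · subst h; exact hrefl _
    · subst h; exact hrel_bar _
  -- every vertex has an outgoing arrow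
  have hexists : ∀ v : Q₀, ∃ e : Q₁, s e = v := by
    intro v
    have hne : (Finset.univ.filter (fun e => s e = v)).Nonempty := by
      rw [← Finset.card_pos, hout v]; norm_num
    obtain ⟨e, he⟩ := hne
    exact ⟨e, (Finset.mem_filter.mp he).2⟩
  have key : ∀ u v : Q₀, Relation.EqvGen (fun a b => ∃ e : Q₁, s e = a ∧ t e = b) u v →
      ∀ a b : Q₁, s a = u → s b = v → rel a b := by
    intro u v h
    induction h with
    | rel u v h =>
      intro a b ha hb
      obtain ⟨e, hse, hte⟩ := h
      refine htrans _ _ _ (hsame a e (by rw [ha, hse])) ?_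
      refine htrans _ _ _ (hrel_g e) (hsame (g e) b ?_)
      rw [hsg, hte, hb]
    | refl u =>
      intro a b ha hb
      exact hsame a b (by rw [ha, hb])
    | symm u v _ ih =>
      intro a b ha hb
      exact hsymm _ _ (ih b a hb ha)
    | trans u v w _ _ ih1 ih2 =>
      intro a b ha hb
      obtain ⟨c, hc⟩ := hexists v
      exact htrans _ _ _ (ih1 a c ha hc) (ih2 c b hc hb)
  intro α β
  exact key (s α) (s β) (hconn (s α) (s β)) α β rfl rfl
end

section
/- For every arrow α ∈ Q₁, the three vertices s(α), s(f(α)), s(f²(α)) are pairwise distinct, and the six arrows α, ᾱ, f(α), g(α), f²(α), g(f(α)) are pairwise distinct. -/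
theorem stmt_5
  {Q₀ Q₁ : Type} [Fintype Q₀] [Fintype Q₁] [DecidableEq Q₀] [DecidableEq Q₁]
  [Nonempty Q₀] [Nonempty Q₁]
  (s t : Q₁ → Q₀)
  (hconn : ∀ u v : Q₀, Relation.EqvGen (fun a b => ∃ e : Q₁, s e = a ∧ t e = b) u v)
  (hnoloop : ∀ e : Q₁, s e ≠ t e)
  (hno2cyc : ∀ e e' : Q₁, ¬ (s e = t e' ∧ t e = s e'))
  (hout : ∀ v : Q₀, (Finset.univ.filter fun e => s e = v).card = 2)
  (hin : ∀ v : Q₀, (Finset.univ.filter fun e => t e = v).card = 2)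
  (f g : Q₁ ≃ Q₁)
  (hfg : ∀ α : Q₁, f α ≠ g α)
  (hsf : ∀ α : Q₁, s (f α) = t α)
  (hsg : ∀ α : Q₁, s (g α) = t α)
  (hf3 : ∀ α : Q₁, f (f (f α)) = α)
  (bar : Q₁ → Q₁)
  (hbar_ne : ∀ α : Q₁, bar α ≠ α)
  (hbar_s : ∀ α : Q₁, s (bar α) = s α) :
    ∀ α : Q₁, ([s α, s (f α), s (f (f α))] : List Q₀).Pairwise (· ≠ ·) ∧
      ([α, bar α, f α, g α, f (f α), g (f α)] : List Q₁).Pairwise (· ≠ ·) := by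
  intro α
  have hAB : s α ≠ s (f α) := by rw [hsf]; exact hnoloop α
  have hBC : s (f α) ≠ s (f (f α)) := by rw [hsf (f α)]; exact hnoloop (f α)
  have hsA : s α = t (f (f α)) := by rw [← hsf (f (f α)), hf3]
  have hAC : s α ≠ s (f (f α)) := by rw [hsA]; exact (hnoloop (f (f α))).symm
  have hsB : s (g α) = s (f α) := by rw [hsg, hsf]
  have hsC : s (g (f α)) = s (f (f α)) := by rw [hsg, hsf]
  have hbar : s (bar α) = s α := hbar_s α
  refine ⟨?_, ?_⟩
  · simp
    exact ⟨⟨hAB, hAC⟩, hBC⟩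
  · have key : ∀ a b : Q₁, s a ≠ s b → a ≠ b := fun a b h hab => h (congrArg s hab)
    simp
    refine ⟨⟨?_, ?_, ?_, ?_, ?_⟩, ⟨?_, ?_, ?_, ?_⟩, ⟨?_, ?_, ?_⟩, ⟨?_, ?_⟩, ?_⟩
    · exact (hbar_ne α).symm
    · exact key _ _ hAB
    · exact key _ _ (by rw [hsB]; exact hAB)
    · exact key _ _ hAC
    · exact key _ _ (by rw [hsC]; exact hAC)
    · exact key _ _ (by rw [hbar]; exact hAB)
    · exact key _ _ (by rw [hbar, hsB]; exact hAB)
    · exact key _ _ (by rw [hbar]; exact hAC)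
    · exact key _ _ (by rw [hbar, hsC]; exact hAC)
    · exact hfg α
    · exact key _ _ hAB
    · exact key _ _ (by rw [hsC]; exact hBC)
    · exact key _ _ (by rw [hsB]; exact hBC)
    · exact key _ _ hAB
    · exact hfg (f α)
end

section
/- For every arrow α ∈ Q₁ one has f²(α) = g^{n_ᾱ − 1}(ᾱ), where n_ᾱ is the size of the g-orbit of ᾱ (the minimal period of ᾱ under g). -/
theorem stmt_6
  {Q₀ Q₁ : Type} [Fintype Q₀] [Fintype Q₁] [DecidableEq Q₀] [DecidableEq Q₁]
  [Nonempty Q₀] [Nonempty Q₁]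
  (s t : Q₁ → Q₀)
  (hconn : ∀ u v : Q₀, Relation.EqvGen (fun a b => ∃ e : Q₁, s e = a ∧ t e = b) u v)
  (hnoloop : ∀ e : Q₁, s e ≠ t e)
  (hno2cyc : ∀ e e' : Q₁, ¬ (s e = t e' ∧ t e = s e'))
  (hout : ∀ v : Q₀, (Finset.univ.filter fun e => s e = v).card = 2)
  (hin : ∀ v : Q₀, (Finset.univ.filter fun e => t e = v).card = 2)
  (f g : Q₁ ≃ Q₁)
  (hfg : ∀ α : Q₁, f α ≠ g α)
  (hsf : ∀ α : Q₁, s (f α) = t α)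
  (hsg : ∀ α : Q₁, s (g α) = t α)
  (hf3 : ∀ α : Q₁, f (f (f α)) = α)
  (bar : Q₁ → Q₁)
  (hbar_ne : ∀ α : Q₁, bar α ≠ α)
  (hbar_s : ∀ α : Q₁, s (bar α) = s α) :
    ∀ α : Q₁, f (f α) = (⇑g)^[Function.minimalPeriod (⇑g) (bar α) - 1] (bar α) := by
  -- key lemma: bar (f β) = g β
  have key : ∀ β : Q₁, bar (f β) = g β := by
    intro β
    by_contra hne
    have hsub : ({f β, g β, bar (f β)} : Finset Q₁) ⊆
        Finset.univ.filter fun e => s e = t β := by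
      intro x hx
      simp only [Finset.mem_insert, Finset.mem_singleton] at hx
      rcases hx with h | h | h <;> subst h <;>
        simp [Finset.mem_filter, hsf, hsg, hbar_s]
    have hcard : ({f β, g β, bar (f β)} : Finset Q₁).card = 3 := by
      rw [Finset.card_insert_of_notMem, Finset.card_insert_of_notMem,
        Finset.card_singleton]
      · simp [Ne.symm hne]
      · simp [hfg β, hbar_ne (f β)]
        exact fun h => (hbar_ne (f β)) h.symm
    have := Finset.card_le_card hsub
    rw [hcard, hout (t β)] at this
    omega
  intro α
  -- g (f (f α)) = bar (f (f (f α))) = bar α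
  have hgff : g (f (f α)) = bar α := by
    have := key (f (f α))
    rw [hf3 α] at this
    exact this.symm
  -- minimal period positivity
  have hper : bar α ∈ Function.periodicPts (⇑g) := by
    refine ⟨orderOf g, ?_, ?_⟩
    · exact orderOf_pos g
    · show (⇑g)^[orderOf g] (bar α) = bar α
      have : (g ^ orderOf g) (bar α) = bar α := by
        rw [pow_orderOf_eq_one g]; rfl
      rwa [← Equiv.Perm.iterate_eq_pow g (orderOf g)] at this
  have hpos : 0 < Function.minimalPeriod (⇑g) (bar α) :=
    Function.minimalPeriod_pos_of_mem_periodicPts hper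
  apply g.injective
  have : (⇑g)^[Function.minimalPeriod (⇑g) (bar α)] (bar α) = bar α :=
    Function.iterate_minimalPeriod
  calc g (f (f α)) = bar α := hgff
    _ = (⇑g)^[Function.minimalPeriod (⇑g) (bar α)] (bar α) := this.symm
    _ = g ((⇑g)^[Function.minimalPeriod (⇑g) (bar α) - 1] (bar α)) := by
        rw [← Function.iterate_succ_apply' (⇑g)]
        congr 1
        omega
end

section
/- For every arrow α ∈ Q₁ one has g(f(α)) = f(g^{n_ᾱ − 2}(ᾱ)), where n_ᾱ is the size of the g-orbit of ᾱ (the minimal period of ᾱ under g). -/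
theorem stmt_7
  {Q₀ Q₁ : Type} [Fintype Q₀] [Fintype Q₁] [DecidableEq Q₀] [DecidableEq Q₁]
  [Nonempty Q₀] [Nonempty Q₁]
  (s t : Q₁ → Q₀)
  (hconn : ∀ u v : Q₀, Relation.EqvGen (fun a b => ∃ e : Q₁, s e = a ∧ t e = b) u v)
  (hnoloop : ∀ e : Q₁, s e ≠ t e)
  (hno2cyc : ∀ e e' : Q₁, ¬ (s e = t e' ∧ t e = s e'))
  (hout : ∀ v : Q₀, (Finset.univ.filter fun e => s e = v).card = 2)
  (hin : ∀ v : Q₀, (Finset.univ.filter fun e => t e = v).card = 2)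
  (f g : Q₁ ≃ Q₁)
  (hfg : ∀ α : Q₁, f α ≠ g α)
  (hsf : ∀ α : Q₁, s (f α) = t α)
  (hsg : ∀ α : Q₁, s (g α) = t α)
  (hf3 : ∀ α : Q₁, f (f (f α)) = α)
  (bar : Q₁ → Q₁)
  (hbar_ne : ∀ α : Q₁, bar α ≠ α)
  (hbar_s : ∀ α : Q₁, s (bar α) = s α) :
    ∀ α : Q₁, g (f α) = f ((⇑g)^[Function.minimalPeriod (⇑g) (bar α) - 2] (bar α)) := by
  -- uniqueness of two outgoing arrows
  have uniq : ∀ a b c : Q₁, s a = s c → s b = s c → a ≠ b → c = a ∨ c = b := by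
    intro a b c ha hb hab
    have hsub : ({a, b} : Finset Q₁) ⊆ Finset.univ.filter (fun e => s e = s c) := by
      intro x hx
      simp only [Finset.mem_insert, Finset.mem_singleton] at hx
      rcases hx with rfl | rfl <;> simp [ha, hb]
    have hcard : ({a, b} : Finset Q₁).card = 2 := Finset.card_pair hab
    have heq : ({a, b} : Finset Q₁) = Finset.univ.filter (fun e => s e = s c) :=
      Finset.eq_of_subset_of_card_le hsub (by rw [hout, hcard])
    have : c ∈ ({a, b} : Finset Q₁) := by rw [heq]; simp
    simpa using this
  -- bar is characterized
  have bar_eq : ∀ a x : Q₁, x ≠ a → s x = s a → bar a = x := by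
    intro a x hx hsx
    rcases uniq x a (bar a) (by rw [hbar_s]; exact hsx) (hbar_s a).symm hx with h | h
    · exact h
    · exact absurd h (hbar_ne a)
  -- g = bar ∘ f
  have gbf : ∀ a : Q₁, g a = bar (f a) := by
    intro a
    exact (bar_eq (f a) (g a) (fun h => hfg a h.symm) (by rw [hsg, hsf])).symm
  -- bar is an involution
  have bb : ∀ a : Q₁, bar (bar a) = a := by
    intro a
    exact bar_eq (bar a) a (fun h => hbar_ne a h.symm) (hbar_s a).symm
  intro α
  set n := Function.minimalPeriod (⇑g) (bar α) with hn
  -- n ≥ 2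
  have hper : Function.IsPeriodicPt (⇑g) (orderOf g) (bar α) := by
    have : (⇑g)^[orderOf g] (bar α) = (g ^ orderOf g) (bar α) := by
      rw [← Equiv.Perm.iterate_eq_pow]
    simp [Function.IsPeriodicPt, Function.IsFixedPt, this, pow_orderOf_eq_one]
  have hpos : 0 < n := Function.IsPeriodicPt.minimalPeriod_pos (orderOf_pos g) hper
  have hne1 : n ≠ 1 := by
    intro h
    have hfix : Function.IsFixedPt (⇑g) (bar α) :=
      (Function.minimalPeriod_eq_one_iff_isFixedPt).mp h
    have : s (g (bar α)) = s (bar α) := by rw [hfix]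
    rw [hsg] at this
    exact hnoloop (bar α) this.symm
  have h2 : 2 ≤ n := by omega
  -- periodicity at the minimal period
  have hpn : (⇑g)^[n] (bar α) = bar α := Function.iterate_minimalPeriod
  -- key computation: g (g (f (f (g (f α))))) = bar α
  set x := f (f (g (f α))) with hx
  have hgx : g x = f (f α) := by
    rw [hx, gbf, gbf (f α), hf3, bb]
  have hggx : g (g x) = bar α := by
    rw [hgx, gbf, hf3]
  -- also g (g (g^[n-2] (bar α))) = bar α
  set y := (⇑g)^[n-2] (bar α) with hy
  have hggy : g (g y) = bar α := by
    have : (⇑g)^[2] ((⇑g)^[n-2] (bar α)) = (⇑g)^[n] (bar α) := by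
      rw [← Function.iterate_add_apply]
      congr 1
      omega
    simpa [Function.iterate_succ_apply', hy] using this.trans hpn
  have hxy : x = y := g.injective (g.injective (hggx.trans hggy.symm))
  rw [← hxy]
  exact (hf3 (g (f α))).symm
end

section
/- For every arrow α ∈ Q₁ the following elements of A are all equal: x(α)·x(f(α))·x(f²(α)) = c(α)·x(α)·x(g(α))·x(g²(α))⋯x(g^{n_α−1}(α)) = c(ᾱ)·x(ᾱ)·x(g(ᾱ))·x(g²(ᾱ))⋯x(g^{n_ᾱ−1}(ᾱ)) = x(ᾱ)·x(f(ᾱ))·x(f²(ᾱ)). -/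
/-- The product `x α * x (g α) * ⋯ * x (g^[m-1] α)` of `m` factors along the `g`-orbit,
read left to right (the empty product for `m = 0` is `1`). -/
def gpath {Q₁ A : Type} [Ring A] (x : Q₁ → A) (g : Q₁ → Q₁) (α : Q₁) (m : ℕ) : A :=
  ((List.range m).map fun i => x (g^[i] α)).prod

lemma gpath_succ {Q₁ A : Type} [Ring A] (x : Q₁ → A) (g : Q₁ → Q₁) (α : Q₁) (m : ℕ) :
    gpath x g α (m+1) = x α * gpath x g (g α) m := by
  simp [gpath, List.range_succ_eq_map, Function.comp_def, Function.iterate_succ_apply]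

lemma gpath_snoc {Q₁ A : Type} [Ring A] (x : Q₁ → A) (g : Q₁ → Q₁) (α : Q₁) (m : ℕ) :
    gpath x g α (m+1) = gpath x g α m * x (g^[m] α) := by
  simp [gpath, List.range_succ]

theorem stmt_11
  {Q₀ Q₁ : Type} [Fintype Q₀] [Fintype Q₁] [DecidableEq Q₀] [DecidableEq Q₁]
  [Nonempty Q₀] [Nonempty Q₁]
  (s t : Q₁ → Q₀)
  (hconn : ∀ u v : Q₀, Relation.EqvGen (fun a b => ∃ e : Q₁, s e = a ∧ t e = b) u v)
  (hnoloop : ∀ e : Q₁, s e ≠ t e)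
  (hno2cyc : ∀ e e' : Q₁, ¬ (s e = t e' ∧ t e = s e'))
  (hout : ∀ v : Q₀, (Finset.univ.filter fun e => s e = v).card = 2)
  (hin : ∀ v : Q₀, (Finset.univ.filter fun e => t e = v).card = 2)
  (f g : Q₁ ≃ Q₁)
  (hfg : ∀ α : Q₁, f α ≠ g α)
  (hsf : ∀ α : Q₁, s (f α) = t α)
  (hsg : ∀ α : Q₁, s (g α) = t α)
  (hf3 : ∀ α : Q₁, f (f (f α)) = α)
  (bar : Q₁ → Q₁)
  (hbar_ne : ∀ α : Q₁, bar α ≠ α)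
  (hbar_s : ∀ α : Q₁, s (bar α) = s α)
  {K : Type} [Field K] {A : Type} [Ring A] [Algebra K A]
  (c : Q₁ → K) (hc0 : ∀ α : Q₁, c α ≠ 0) (hcg : ∀ α : Q₁, c (g α) = c α)
  (x : Q₁ → A)
  (hrel : ∀ α : Q₁, x (f α) * x (f (f α)) =
      c α • gpath x (⇑g) (g α) (Function.minimalPeriod (⇑g) α - 1)) :
    ∀ α : Q₁,
      x α * x (f α) * x (f (f α)) =
        c α • gpath x (⇑g) α (Function.minimalPeriod (⇑g) α) ∧
      c α • gpath x (⇑g) α (Function.minimalPeriod (⇑g) α) =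
        c (bar α) • gpath x (⇑g) (bar α) (Function.minimalPeriod (⇑g) (bar α)) ∧
      c (bar α) • gpath x (⇑g) (bar α) (Function.minimalPeriod (⇑g) (bar α)) =
        x (bar α) * x (f (bar α)) * x (f (f (bar α))) := by
  have hper : ∀ β : Q₁, β ∈ Function.periodicPts ⇑g := fun β =>
    Function.mk_mem_periodicPts (orderOf_pos g)
      (by simp [Function.IsPeriodicPt, Function.IsFixedPt, ← Equiv.Perm.coe_pow,
            pow_orderOf_eq_one])
  have hnpos : ∀ β : Q₁, 0 < Function.minimalPeriod ⇑g β := fun β =>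
    Function.minimalPeriod_pos_of_mem_periodicPts (hper β)
  have hiter : ∀ β : Q₁, g^[Function.minimalPeriod ⇑g β] β = β := fun β =>
    Function.iterate_minimalPeriod
  have hmp_apply : ∀ β : Q₁, Function.minimalPeriod ⇑g (g β) = Function.minimalPeriod ⇑g β :=
    fun β => Function.minimalPeriod_apply (hper β)
  -- Lemma A
  have hA : ∀ α : Q₁, x α * x (f α) * x (f (f α)) =
      c α • gpath x (⇑g) α (Function.minimalPeriod (⇑g) α) := by
    intro α
    obtain ⟨m, hm⟩ : ∃ m, Function.minimalPeriod ⇑g α = m + 1 :=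
      ⟨_, (Nat.succ_pred_eq_of_pos (hnpos α)).symm⟩
    have h1 := hrel α
    rw [hm, Nat.add_sub_cancel] at h1
    rw [hm, gpath_succ, mul_assoc, h1, mul_smul_comm]
  -- Lemma B
  have hB : ∀ α : Q₁, x α * x (f α) * x (f (f α)) =
      c (bar α) • gpath x (⇑g) (bar α) (Function.minimalPeriod (⇑g) (bar α)) := by
    intro α
    set β := f (f α) with hβ
    have hfβ : f β = α := hf3 α
    have hgβα : g β ≠ α := by
      intro h
      exact hfg β (by rw [hfβ, h])
    have hbar : bar α = g β := by
      by_contra hne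
      have hsgβ : s (g β) = s α := by rw [hsg β, ← hsf β, hfβ]
      have hsub : ({α, bar α, g β} : Finset Q₁) ⊆
          Finset.univ.filter (fun e => s e = s α) := by
        intro e he
        simp only [Finset.mem_insert, Finset.mem_singleton] at he
        rcases he with rfl | rfl | rfl <;> simp [hbar_s, hsgβ]
      have hcard : ({α, bar α, g β} : Finset Q₁).card = 3 := by
        rw [Finset.card_insert_of_notMem, Finset.card_insert_of_notMem,
          Finset.card_singleton]
        · simpa using hne
        · simp only [Finset.mem_insert, Finset.mem_singleton, not_or]
          exact ⟨(hbar_ne α).symm, hgβα.symm⟩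
      have := Finset.card_le_card hsub
      rw [hcard, hout (s α)] at this
      omega
    have h1 := hrel β
    rw [hfβ] at h1
    obtain ⟨m, hm⟩ : ∃ m, Function.minimalPeriod ⇑g β = m + 1 :=
      ⟨_, (Nat.succ_pred_eq_of_pos (hnpos β)).symm⟩
    rw [hm, Nat.add_sub_cancel] at h1
    have hlast : g^[m] (g β) = β := by
      rw [← Function.iterate_succ_apply, Nat.succ_eq_add_one, ← hm]
      exact hiter β
    calc x α * x (f α) * x β
        = (c β • gpath x (⇑g) (g β) m) * x β := by rw [h1]
      _ = c β • (gpath x (⇑g) (g β) m * x (g^[m] (g β))) := by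
          rw [hlast, smul_mul_assoc]
      _ = c β • gpath x (⇑g) (g β) (m + 1) := by rw [gpath_snoc]
      _ = c (bar α) • gpath x (⇑g) (bar α) (Function.minimalPeriod (⇑g) (bar α)) := by
          rw [hbar, hmp_apply β, hm, hcg β]
  intro α
  exact ⟨hA α, (hA α).symm.trans (hB α), (hA (bar α)).symm⟩
end

section
/- For every arrow α ∈ Q₁ one has the relation x(α)·x(f(α))·x(g(f(α))) = c(ᾱ)·x(ᾱ)·x(g(ᾱ))⋯x(g^{n_ᾱ−3}(ᾱ))·x(g^{n_ᾱ−2}(ᾱ))·x(f(g^{n_ᾱ−2}(ᾱ))) in A. -/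
theorem stmt_13
  {Q₀ Q₁ : Type} [Fintype Q₀] [Fintype Q₁] [DecidableEq Q₀] [DecidableEq Q₁]
  [Nonempty Q₀] [Nonempty Q₁]
  (s t : Q₁ → Q₀)
  (hconn : ∀ u v : Q₀, Relation.EqvGen (fun a b => ∃ e : Q₁, s e = a ∧ t e = b) u v)
  (hnoloop : ∀ e : Q₁, s e ≠ t e)
  (hno2cyc : ∀ e e' : Q₁, ¬ (s e = t e' ∧ t e = s e'))
  (hout : ∀ v : Q₀, (Finset.univ.filter fun e => s e = v).card = 2)
  (hin : ∀ v : Q₀, (Finset.univ.filter fun e => t e = v).card = 2)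
  (f g : Q₁ ≃ Q₁)
  (hfg : ∀ α : Q₁, f α ≠ g α)
  (hsf : ∀ α : Q₁, s (f α) = t α)
  (hsg : ∀ α : Q₁, s (g α) = t α)
  (hf3 : ∀ α : Q₁, f (f (f α)) = α)
  (bar : Q₁ → Q₁)
  (hbar_ne : ∀ α : Q₁, bar α ≠ α)
  (hbar_s : ∀ α : Q₁, s (bar α) = s α)
  {K : Type} [Field K] {A : Type} [Ring A] [Algebra K A]
  (c : Q₁ → K) (hc0 : ∀ α : Q₁, c α ≠ 0) (hcg : ∀ α : Q₁, c (g α) = c α)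
  (x : Q₁ → A)
  (hrel : ∀ α : Q₁, x (f α) * x (f (f α)) =
      c α • gpath x (⇑g) (g α) (Function.minimalPeriod (⇑g) α - 1)) :
    ∀ α : Q₁, x α * x (f α) * x (g (f α)) =
      c (bar α) • (gpath x (⇑g) (bar α) (Function.minimalPeriod (⇑g) (bar α) - 1) *
        x (f ((⇑g)^[Function.minimalPeriod (⇑g) (bar α) - 2] (bar α)))) := by
  -- uniqueness of the second arrow with a given source
  have key : ∀ (a b d : Q₁), s b = s a → s d = s a → a ≠ b → d ≠ a → d = b := by
    intro a b d hb hd hab hda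
    obtain ⟨u, w, huw, huniv⟩ := Finset.card_eq_two.mp (hout (s a))
    have ma : a ∈ ({u, w} : Finset Q₁) := by
      rw [← huniv]; simp
    have mb : b ∈ ({u, w} : Finset Q₁) := by
      rw [← huniv]; simp [hb]
    have md : d ∈ ({u, w} : Finset Q₁) := by
      rw [← huniv]; simp [hd]
    simp only [Finset.mem_insert, Finset.mem_singleton] at ma mb md
    rcases ma with rfl | rfl <;> rcases mb with rfl | rfl <;> rcases md with rfl | rfl <;>
      first
      | rfl
      | exact absurd rfl hab
      | exact absurd rfl hda
  have bar_f : ∀ β : Q₁, bar (f β) = g β := by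
    intro β
    exact key (f β) (g β) (bar (f β)) (by rw [hsg, hsf]) (hbar_s (f β)) (hfg β)
      (hbar_ne (f β))
  have bar_g : ∀ β : Q₁, bar (g β) = f β := by
    intro β
    exact key (g β) (f β) (bar (g β)) (by rw [hsg, hsf]) (hbar_s (g β)) (Ne.symm (hfg β))
      (hbar_ne (g β))
  -- every point is periodic for g
  have hper : ∀ β : Q₁, β ∈ Function.periodicPts ⇑g := by
    intro β
    refine ⟨orderOf g, orderOf_pos g, ?_⟩
    show (⇑g)^[orderOf g] β = β
    rw [Equiv.Perm.iterate_eq_pow, pow_orderOf_eq_one]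
    rfl
  intro α
  set γ := f (f α) with hγ
  have hfγ : f γ = α := hf3 α
  have hbarα : bar α = g γ := by rw [← hfγ, bar_f]
  set n := Function.minimalPeriod (⇑g) (bar α) with hn
  have hmn : Function.minimalPeriod (⇑g) γ = n := by
    rw [hn, hbarα, Function.minimalPeriod_apply (hper γ)]
  -- n ≥ 3
  have hn1 : n ≠ 1 := by
    intro h
    have hfix : g (bar α) = bar α := by
      have := Function.iterate_minimalPeriod (f := ⇑g) (x := bar α)
      rwa [← hn, h, Function.iterate_one] at this
    have h' := hsg (bar α)
    rw [hfix] at h'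
    exact hnoloop (bar α) h' 
  have hn2 : n ≠ 2 := by
    intro h
    have h2 : g (g (bar α)) = bar α := by
      have := Function.iterate_minimalPeriod (f := ⇑g) (x := bar α)
      rwa [← hn, h] at this
    exact hno2cyc (g (bar α)) (bar α)
      ⟨hsg (bar α), by rw [← hsg (g (bar α)), h2]⟩
  have hnpos : 0 < n := Function.minimalPeriod_pos_of_mem_periodicPts (hper (bar α))
  have hn3 : 3 ≤ n := by omega
  -- iterate computations
  have hitn : (⇑g)^[n] γ = γ := by
    rw [← hmn]; exact Function.iterate_minimalPeriod
  have hit1 : (⇑g)^[n - 1] (bar α) = γ := by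
    rw [hbarα, ← Function.iterate_succ_apply]
    show (⇑g)^[n - 1 + 1] γ = γ
    rw [show n - 1 + 1 = n from by omega]
    exact hitn
  have hit2 : (⇑g)^[n - 2] (bar α) = g.symm γ := by
    apply g.injective
    rw [Equiv.apply_symm_apply]
    calc g ((⇑g)^[n - 2] (bar α))
        = (⇑g)^[n - 2 + 1] (bar α) := (Function.iterate_succ_apply' _ _ _).symm
      _ = (⇑g)^[n - 1] (bar α) := by rw [show n - 2 + 1 = n - 1 from by omega]
      _ = γ := hit1
  have hfit2 : f ((⇑g)^[n - 2] (bar α)) = g (f α) := by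
    rw [hit2, ← bar_g (g.symm γ), Equiv.apply_symm_apply, hγ, bar_f]
  have hcγ : c (bar α) = c γ := by rw [hbarα, hcg]
  -- the defining relation at γ
  have h := hrel γ
  rw [hfγ, hmn, ← hbarα] at h
  -- h : x α * x (f α) = c γ • gpath x ⇑g (bar α) (n - 1)
  calc x α * x (f α) * x (g (f α))
      = (c γ • gpath x (⇑g) (bar α) (n - 1)) * x (g (f α)) := by rw [← h]
    _ = c γ • (gpath x (⇑g) (bar α) (n - 1) * x (g (f α))) := smul_mul_assoc _ _ _
    _ = c (bar α) • (gpath x (⇑g) (bar α) (n - 1) *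
          x (f ((⇑g)^[n - 2] (bar α)))) := by rw [hcγ, hfit2]
end

section
/- Assume in addition condition (◇): g∘g∘g = id on Q₁, and assume that for every arrow α the product c(α)·c(ᾱ)·c(f(α))·c(f(ᾱ)) ≠ 1 (by Lemma 3.9 these four arrows represent the four g-orbits, so this says the product of the scalars over one representative of each g-orbit is not 1). Then for every arrow α ∈ Q₁: x(α)·x(g(α))·x(f(g(α))) = 0 and x(α)·x(f(α))·x(g(f(α))) = 0 in A. -/
lemma two_of_card_two {Q : Type} [DecidableEq Q] {S : Finset Q} (hS : S.card = 2)
    {a b c : Q} (ha : a ∈ S) (hb : b ∈ S) (hc : c ∈ S) (hba : b ≠ a) (hca : c ≠ a) :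
    b = c := by
  obtain ⟨u, v, huv, rfl⟩ := Finset.card_eq_two.mp hS
  simp only [Finset.mem_insert, Finset.mem_singleton] at ha hb hc
  rcases ha with rfl | rfl <;> rcases hb with rfl | rfl <;> rcases hc with rfl | rfl <;>
    first | rfl | (exact absurd rfl hba) | (exact absurd rfl hca)

theorem stmt_15
  {Q₀ Q₁ : Type} [Fintype Q₀] [Fintype Q₁] [DecidableEq Q₀] [DecidableEq Q₁]
  [Nonempty Q₀] [Nonempty Q₁]
  (s t : Q₁ → Q₀)
  (hconn : ∀ u v : Q₀, Relation.EqvGen (fun a b => ∃ e : Q₁, s e = a ∧ t e = b) u v)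
  (hnoloop : ∀ e : Q₁, s e ≠ t e)
  (hno2cyc : ∀ e e' : Q₁, ¬ (s e = t e' ∧ t e = s e'))
  (hout : ∀ v : Q₀, (Finset.univ.filter fun e => s e = v).card = 2)
  (hin : ∀ v : Q₀, (Finset.univ.filter fun e => t e = v).card = 2)
  (f g : Q₁ ≃ Q₁)
  (hfg : ∀ α : Q₁, f α ≠ g α)
  (hsf : ∀ α : Q₁, s (f α) = t α)
  (hsg : ∀ α : Q₁, s (g α) = t α)
  (hf3 : ∀ α : Q₁, f (f (f α)) = α)
  (bar : Q₁ → Q₁)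
  (hbar_ne : ∀ α : Q₁, bar α ≠ α)
  (hbar_s : ∀ α : Q₁, s (bar α) = s α)
  {K : Type} [Field K] {A : Type} [Ring A] [Algebra K A]
  (c : Q₁ → K) (hc0 : ∀ α : Q₁, c α ≠ 0) (hcg : ∀ α : Q₁, c (g α) = c α)
  (x : Q₁ → A)
  (hrel : ∀ α : Q₁, x (f α) * x (f (f α)) =
      c α • gpath x (⇑g) (g α) (Function.minimalPeriod (⇑g) α - 1))
  (hdia : ∀ α : Q₁, g (g (g α)) = α)
  (hc1 : ∀ α : Q₁, c α * c (bar α) * c (f α) * c (f (bar α)) ≠ 1) :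
    ∀ α : Q₁, x α * x (g α) * x (f (g α)) = 0 ∧ x α * x (f α) * x (g (f α)) = 0 := by
  -- g has no fixed points
  have hgne : ∀ α : Q₁, g α ≠ α := by
    intro α h
    exact hnoloop α (by rw [← hsg α, h])
  -- the key combinatorial identity f ∘ g² = g ∘ f²
  have key : ∀ β : Q₁, f (g (g β)) = g (f (f β)) := by
    intro β
    have hS := hout (s β)
    have ha : β ∈ Finset.univ.filter fun e => s e = s β := by simp
    have hb : f (g (g β)) ∈ Finset.univ.filter fun e => s e = s β := by
      simp only [Finset.mem_filter, Finset.mem_univ, true_and]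
      rw [hsf, ← hsg, hdia]
    have hc : g (f (f β)) ∈ Finset.univ.filter fun e => s e = s β := by
      simp only [Finset.mem_filter, Finset.mem_univ, true_and]
      rw [hsg, ← hsf, hf3]
    have hba : f (g (g β)) ≠ β := by
      have h := hfg (g (g β)); rwa [hdia β] at h
    have hca : g (f (f β)) ≠ β := by
      have h := hfg (f (f β)); rw [hf3 β] at h; exact h.symm
    exact two_of_card_two hS ha hb hc hba hca
  -- derived identities
  have key3 : ∀ y : Q₁, f (g (g (f y))) = g y := by
    intro y
    rw [key (f y), hf3]
  have key2 : ∀ z : Q₁, g (f (f (g z))) = f z := by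
    intro z
    rw [← key (g z), hdia]
  have key4 : ∀ y : Q₁, g (g (f y)) = f (f (g y)) := by
    intro y
    have := key3 y
    calc g (g (f y)) = f (f (f (g (g (f y))))) := (hf3 _).symm
    _ = f (f (g y)) := by rw [this]
  have braid : ∀ y : Q₁, g (f (g y)) = f (g (f y)) := by
    intro y
    calc g (f (g y)) = g (f (f (g (g (f y))))) := by rw [key3 y]
    _ = f (g (f y)) := key2 (g (f y))
  -- bar α = g (f (f α))
  have bar_eq : ∀ α : Q₁, bar α = g (f (f α)) := by
    intro α
    have hS := hout (s α)
    have ha : α ∈ Finset.univ.filter fun e => s e = s α := by simp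
    have hb : bar α ∈ Finset.univ.filter fun e => s e = s α := by
      simp only [Finset.mem_filter, Finset.mem_univ, true_and]; exact hbar_s α
    have hc : g (f (f α)) ∈ Finset.univ.filter fun e => s e = s α := by
      simp only [Finset.mem_filter, Finset.mem_univ, true_and]
      rw [hsg, ← hsf, hf3]
    have hca : g (f (f α)) ≠ α := by
      have h := hfg (f (f α)); rw [hf3 α] at h; exact h.symm
    exact two_of_card_two hS ha hb hc (hbar_ne α) hca
  -- minimal period of g is 3
  have minp : ∀ α : Q₁, Function.minimalPeriod (⇑g) α = 3 := by
    intro α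
    have hper : Function.IsPeriodicPt (⇑g) 3 α := by
      show (⇑g)^[3] α = α
      show g (g (g α)) = α
      exact hdia α
    have hdvd := Function.IsPeriodicPt.minimalPeriod_dvd hper
    rcases (Nat.prime_three).eq_one_or_self_of_dvd _ hdvd with h | h
    · exfalso
      have := Function.iterate_minimalPeriod (f := ⇑g) (x := α)
      rw [h] at this
      exact hgne α this
    · exact h
  -- the relation with g-paths of length 2
  have hrel' : ∀ β : Q₁, x (f β) * x (f (f β)) = c β • (x (g β) * x (g (g β))) := by
    intro β
    have h := hrel β
    rw [minp β] at h
    have hp : gpath x (⇑g) (g β) (3 - 1) = x (g β) * x (g (g β)) := by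
      show gpath x (⇑g) (g β) 2 = _
      simp [gpath, List.range_succ]
    rw [hp] at h
    exact h
  have R1 : ∀ β : Q₁, x β * x (f β)
      = c (f (f β)) • (x (g (f (f β))) * x (g (g (f (f β))))) := by
    intro β
    have h := hrel' (f (f β))
    rwa [hf3 β] at h
  intro α
  -- the two products
  set P2 := x α * x (f α) * x (g (f α)) with hP2
  set P1 := x α * x (g α) * x (f (g α)) with hP1
  -- step 2 ingredient
  have h2 : x (g (g (f (f α)))) * x (g (f α))
      = c (f (g (f α))) • (x (g (f (g (f α)))) * x (g (g (f (g (f α)))))) := by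
    have h := R1 (g (g (f (f α))))
    rwa [key3 (f α)] at h
  -- step 3 ingredient
  have h3 : x (g (f (f α))) * x (g (f (g (f α))))
      = c (g (g α)) • (x α * x (g α)) := by
    have h := R1 (g (f (f α)))
    have e2 : f (f (g (f (f α)))) = g (g α) := by
      rw [← key4 (f (f α)), hf3]
    have e1 : f (g (f (f α))) = g (f (g (f α))) := (braid (f α)).symm
    rw [e2] at h
    rw [e1] at h
    rwa [hdia α] at h
  -- third-entry identity after step 3
  have e5 : g (g (f (g (f α)))) = f (g α) := by
    rw [key4 (g (f α))]
    rw [key3 α]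
  -- step 4 ingredient
  have h4 : x (g α) * x (f (g α)) = c (f α) • (x (f α) * x (g (f α))) := by
    have h := R1 (g α)
    rw [key2 α] at h
    have hc' : c (f (f (g α))) = c (f α) := by rw [← key4 α, hcg, hcg]
    rwa [hc'] at h
  -- P2 = μ • P1
  have step1 : P2 = c (f (f α)) •
      (x (g (f (f α))) * x (g (g (f (f α)))) * x (g (f α))) := by
    rw [hP2, R1 α, smul_mul_assoc]
  have stepA : P2 = (c (f (f α)) * c (f (g (f α))) * c (g (g α))) • P1 := by
    rw [step1, mul_assoc, h2]
    rw [mul_smul_comm, smul_smul]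
    rw [← mul_assoc (x (g (f (f α))))]
    rw [h3, e5, smul_mul_assoc, smul_smul, hP1]
  have stepB : P1 = c (f α) • P2 := by
    rw [hP1, hP2, mul_assoc, h4, mul_smul_comm, ← mul_assoc]
  -- conclude
  set lam : K := c (f (f α)) * c (f (g (f α))) * c (g (g α)) * c (f α) with hlam
  have hPP : P2 = lam • P2 := by
    calc P2 = (c (f (f α)) * c (f (g (f α))) * c (g (g α))) • P1 := stepA
    _ = (c (f (f α)) * c (f (g (f α))) * c (g (g α))) • (c (f α) • P2) := by rw [stepB]
    _ = lam • P2 := by rw [smul_smul, hlam]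
  have hlam_ne : lam ≠ 1 := by
    have hb := bar_eq α
    have hc1' := hc1 α
    have e1 : c (bar α) = c (f (f α)) := by rw [hb, hcg]
    have e2 : c (f (bar α)) = c (f (g (f α))) := by
      rw [hb, ← braid (f α), hcg]
    have e3 : c (g (g α)) = c α := by rw [hcg, hcg]
    rw [e1, e2] at hc1'
    rw [hlam, e3]
    intro h
    apply hc1'
    rw [← h]; ring
  have hz : P2 = 0 := by
    have h : ((1 : K) - lam) • P2 = 0 := by
      rw [sub_smul, one_smul, ← hPP, sub_self]
    have hne : (1 : K) - lam ≠ 0 := sub_ne_zero_of_ne (Ne.symm hlam_ne)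
    calc P2 = (((1 : K) - lam)⁻¹ * ((1 : K) - lam)) • P2 := by
          rw [inv_mul_cancel₀ hne, one_smul]
    _ = ((1 : K) - lam)⁻¹ • (((1 : K) - lam) • P2) := by rw [smul_smul]
    _ = 0 := by rw [h, smul_zero]
  constructor
  · rw [stepB, hz, smul_zero]
  · exact hz
end

section
/- Assume in addition the vanishing relations of Proposition 3.8: for every arrow β, x(β)·x(g(β))·x(f(g(β))) = 0 and x(β)·x(f(β))·x(g(f(β))) = 0. Then for every arrow α ∈ Q₁: x(α)·x(f(α))·x(f²(α))·x(α) = 0 and x(α)·x(g(α))·x(g²(α))⋯x(g^{n_α−1}(α))·x(α) = 0 in A. -/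
lemma gpath_succ_left {Q₁ A : Type} [Ring A] (x : Q₁ → A) (g : Q₁ → Q₁) (α : Q₁) (m : ℕ) :
    gpath x g α (m + 1) = x α * gpath x g (g α) m := by
  simp [gpath, List.range_succ_eq_map, List.map_map, Function.comp_def,
    Function.iterate_succ_apply]

lemma minper_two {Q₁ : Type} [Fintype Q₁] (g : Q₁ ≃ Q₁) (α : Q₁) (h : g α ≠ α) :
    2 ≤ Function.minimalPeriod (⇑g) α := by
  have hpos : 0 < Function.minimalPeriod (⇑g) α := by
    apply Function.IsPeriodicPt.minimalPeriod_pos (orderOf_pos g)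
    show (⇑g)^[orderOf g] α = α
    rw [Equiv.Perm.iterate_eq_pow, pow_orderOf_eq_one]; rfl
  by_contra h2
  push_neg at h2
  have h1 : Function.minimalPeriod (⇑g) α = 1 := by omega
  apply h
  have := Function.iterate_minimalPeriod (f := ⇑g) (x := α)
  rw [h1] at this; simpa using this

theorem stmt_16
  {Q₀ Q₁ : Type} [Fintype Q₀] [Fintype Q₁] [DecidableEq Q₀] [DecidableEq Q₁]
  [Nonempty Q₀] [Nonempty Q₁]
  (s t : Q₁ → Q₀)
  (hconn : ∀ u v : Q₀, Relation.EqvGen (fun a b => ∃ e : Q₁, s e = a ∧ t e = b) u v)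
  (hnoloop : ∀ e : Q₁, s e ≠ t e)
  (hno2cyc : ∀ e e' : Q₁, ¬ (s e = t e' ∧ t e = s e'))
  (hout : ∀ v : Q₀, (Finset.univ.filter fun e => s e = v).card = 2)
  (hin : ∀ v : Q₀, (Finset.univ.filter fun e => t e = v).card = 2)
  (f g : Q₁ ≃ Q₁)
  (hfg : ∀ α : Q₁, f α ≠ g α)
  (hsf : ∀ α : Q₁, s (f α) = t α)
  (hsg : ∀ α : Q₁, s (g α) = t α)
  (hf3 : ∀ α : Q₁, f (f (f α)) = α)
  (bar : Q₁ → Q₁)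
  (hbar_ne : ∀ α : Q₁, bar α ≠ α)
  (hbar_s : ∀ α : Q₁, s (bar α) = s α)
  {K : Type} [Field K] {A : Type} [Ring A] [Algebra K A]
  (c : Q₁ → K) (hc0 : ∀ α : Q₁, c α ≠ 0) (hcg : ∀ α : Q₁, c (g α) = c α)
  (x : Q₁ → A)
  (hrel : ∀ α : Q₁, x (f α) * x (f (f α)) =
      c α • gpath x (⇑g) (g α) (Function.minimalPeriod (⇑g) α - 1))
  (hvan : ∀ β : Q₁, x β * x (g β) * x (f (g β)) = 0 ∧ x β * x (f β) * x (g (f β)) = 0) :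
    ∀ α : Q₁, x α * x (f α) * x (f (f α)) * x α = 0 ∧
      gpath x (⇑g) α (Function.minimalPeriod (⇑g) α) * x α = 0 := by
  -- no arrow is fixed by g
  have hgne : ∀ α : Q₁, g α ≠ α := by
    intro α h
    exact hnoloop α (by rw [← hsg α, h])
  intro α
  -- first statement
  have h1 : x α * x (f α) * x (f (f α)) * x α = 0 := by
    have hm2 : 2 ≤ Function.minimalPeriod (⇑g) (f α) := minper_two g (f α) (hgne (f α))
    obtain ⟨k, hk⟩ : ∃ k, Function.minimalPeriod (⇑g) (f α) - 1 = k + 1 :=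
      ⟨Function.minimalPeriod (⇑g) (f α) - 2, by omega⟩
    have hr := hrel (f α)
    rw [hf3 α, hk, gpath_succ_left] at hr
    calc x α * x (f α) * x (f (f α)) * x α
        = x α * x (f α) * (x (f (f α)) * x α) := by rw [mul_assoc]
      _ = x α * x (f α) * (c (f α) • (x (g (f α)) * gpath x (⇑g) (g (g (f α))) k)) := by
          rw [hr]
      _ = c (f α) • (x α * x (f α) * x (g (f α)) * gpath x (⇑g) (g (g (f α))) k) := by
          rw [mul_smul_comm, mul_assoc, mul_assoc, mul_assoc]
      _ = 0 := by rw [(hvan α).2, zero_mul, smul_zero]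
  refine ⟨h1, ?_⟩
  -- second statement
  have hm2 : 2 ≤ Function.minimalPeriod (⇑g) α := minper_two g α (hgne α)
  obtain ⟨k, hk⟩ : ∃ k, Function.minimalPeriod (⇑g) α = k + 1 :=
    ⟨Function.minimalPeriod (⇑g) α - 1, by omega⟩
  have hr := hrel α
  have hkey : c α • (gpath x (⇑g) α (Function.minimalPeriod (⇑g) α) * x α)
      = x α * x (f α) * x (f (f α)) * x α := by
    rw [hk, gpath_succ_left, mul_assoc (x α) (x (f α)), hr]
    rw [hk]
    simp only [Nat.add_sub_cancel, smul_mul_assoc, mul_smul_comm, mul_assoc]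
  have : c α • (gpath x (⇑g) α (Function.minimalPeriod (⇑g) α) * x α) = 0 := by
    rw [hkey, h1]
  have := congrArg (fun y => (c α)⁻¹ • y) this
  simpa [smul_smul, inv_mul_cancel₀ (hc0 α)] using this
end
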